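/- Let K be a convex body in ℝ^d, d > 2, let b be a boundary point of K, and let F be a face of K of smallest dimension containing b. Then b is X-rayed along a line L through the origin if and only if the great subsphere L^⊥ ∩ S^{d-1} is disjoint from the Gauss image ν(F) of F. -/
import Mathlib


open scoped RealInnerProductSpace Pointwise

/-- `F` is a face of `K`: the intersection of `K` with a supporting hyperplane. -/
def IsFaceOf {d : ℕ} (K F : Set (EuclideanSpace ℝ (Fin d))) : Prop :=
  ∃ (n : EuclideanSpace ℝ (Fin d)) (c : ℝ), n ≠ 0 ∧ (∀ x ∈ K, ⟪n, x⟫ ≤ c) ∧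
    (∃ x ∈ K, ⟪n, x⟫ = c) ∧ F = {x ∈ K | ⟪n, x⟫ = c}

/-- The Gauss image of a face `F` of `K`: all unit outer normals `n` whose supporting
hyperplane contains `F`. -/
def gaussImage {d : ℕ} (K F : Set (EuclideanSpace ℝ (Fin d))) :
    Set (EuclideanSpace ℝ (Fin d)) :=
  {n | ‖n‖ = 1 ∧ ∃ c : ℝ, (∀ x ∈ K, ⟪n, x⟫ ≤ c) ∧ ∀ y ∈ F, ⟪n, y⟫ = c}

/-- Support functional is strictly below its max on interior points. -/
lemma inner_lt_of_mem_interior {d : ℕ} {K : Set (EuclideanSpace ℝ (Fin d))}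
    {n x : EuclideanSpace ℝ (Fin d)} {c : ℝ} (hn : n ≠ 0)
    (hsup : ∀ y ∈ K, ⟪n, y⟫ ≤ c) (hx : x ∈ interior K) : ⟪n, x⟫ < c := by
  obtain ⟨ε, hε, hball⟩ := Metric.isOpen_iff.1 isOpen_interior x hx
  have hnn : (0 : ℝ) < ‖n‖ := norm_pos_iff.2 hn
  set δ := ε / (2 * ‖n‖) with hδdef
  have hδ : 0 < δ := div_pos hε (by positivity)
  have hmem : x + δ • n ∈ K := by
    apply interior_subset (hball ?_)
    have : dist (x + δ • n) x = δ * ‖n‖ := by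
      rw [dist_eq_norm]
      simp [norm_smul, abs_of_pos hδ]
    rw [Metric.mem_ball, this, hδdef]
    rw [div_mul_eq_mul_div, mul_comm (2:ℝ) ‖n‖, ← div_div, mul_div_assoc,
      div_self (ne_of_gt hnn), mul_one]
    linarith
  have h := hsup _ hmem
  rw [inner_add_right, real_inner_smul_right, real_inner_self_eq_norm_sq] at h
  have hpos : 0 < δ * ‖n‖ ^ 2 := by positivity
  linarith

lemma subset_closure_interior' {d : ℕ} {K : Set (EuclideanSpace ℝ (Fin d))}
    (hKconv : Convex ℝ K) (hKint : (interior K).Nonempty) :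
    K ⊆ closure (interior K) := by
  obtain ⟨y, hy⟩ := hKint
  intro x hx
  have htend : Filter.Tendsto (fun t : ℝ => t • y + (1 - t) • x)
      (nhdsWithin 0 (Set.Ioi 0)) (nhds x) := by
    have hc : Continuous (fun t : ℝ => t • y + (1 - t) • x) := by fun_prop
    have h0 := hc.tendsto 0
    simp only [zero_smul, sub_zero, one_smul, zero_add] at h0
    exact h0.mono_left nhdsWithin_le_nhds
  refine mem_closure_of_tendsto htend ?_
  have h1 : ∀ᶠ t : ℝ in nhdsWithin 0 (Set.Ioi 0), t < 1 :=
    Filter.Eventually.filter_mono nhdsWithin_le_nhds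
      (eventually_lt_nhds (by norm_num : (0:ℝ) < 1))
  filter_upwards [self_mem_nhdsWithin, h1] with t ht ht1
  have : t • y + (1 - t) • x ∈ t • interior K + (1 - t) • K :=
    Set.add_mem_add (Set.smul_mem_smul_set hy) (Set.smul_mem_smul_set hx)
  exact hKconv.combo_interior_self_subset_interior ht (by linarith) (by ring) this

theorem xrayed_iff_gauss_image_misses_great_sphere {d : ℕ} (hd : 2 < d)
    (K : Set (EuclideanSpace ℝ (Fin d)))
    (hKc : IsCompact K) (hKconv : Convex ℝ K) (hKint : (interior K).Nonempty)
    (b : EuclideanSpace ℝ (Fin d)) (hb : b ∈ frontier K)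
    (F : Set (EuclideanSpace ℝ (Fin d))) (hF : IsFaceOf K F) (hbF : b ∈ F)
    (hmin : ∀ F' : Set (EuclideanSpace ℝ (Fin d)), IsFaceOf K F' → b ∈ F' →
      Module.finrank ℝ (affineSpan ℝ F).direction ≤
        Module.finrank ℝ (affineSpan ℝ F').direction)
    (v : EuclideanSpace ℝ (Fin d)) (hv : v ≠ 0) :
    (∃ t : ℝ, b + t • v ∈ interior K) ↔
      ∀ n ∈ gaussImage K F, ⟪n, v⟫ ≠ 0 := by
  have hbK : b ∈ K := hKc.isClosed.frontier_subset hb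
  constructor
  · rintro ⟨t, ht⟩ n ⟨hn1, c, hsup, heq⟩ hnv
    have hn0 : n ≠ 0 := by
      intro h; rw [h, norm_zero] at hn1; norm_num at hn1
    have h1 : ⟪n, b⟫ = c := heq b hbF
    have h2 : ⟪n, b + t • v⟫ < c := inner_lt_of_mem_interior hn0 hsup ht
    rw [inner_add_right, real_inner_smul_right, hnv, mul_zero, add_zero, h1] at h2
    exact lt_irrefl _ h2
  · intro hgauss
    by_contra hno
    push_neg at hno
    set L : Set (EuclideanSpace ℝ (Fin d)) := Set.range (fun t : ℝ => b + t • v) with hLdef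
    have hLconv : Convex ℝ L := by
      rintro _ ⟨t₁, rfl⟩ _ ⟨t₂, rfl⟩ a c ha hc hac
      refine ⟨a * t₁ + c * t₂, ?_⟩
      have h : a • (b + t₁ • v) + c • (b + t₂ • v)
          = (a + c) • b + (a * t₁ + c * t₂) • v := by module
      rw [h, hac, one_smul]
    have hdisj : Disjoint (interior K) L := by
      rw [Set.disjoint_left]
      rintro x hx ⟨t, rfl⟩
      exact hno t hx
    obtain ⟨f, u, hfu1, hfu2⟩ :=
      geometric_hahn_banach_open hKconv.interior isOpen_interior hLconv hdisj
    -- f ≤ u on K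
    have hKle : ∀ x ∈ K, f x ≤ u := by
      intro x hx
      have hcl : closure (interior K) ⊆ {z | f z ≤ u} :=
        closure_minimal (fun z hz => le_of_lt (hfu1 z hz))
          (isClosed_le f.continuous continuous_const)
      exact hcl (subset_closure_interior' hKconv hKint hx)
    have hbL : b ∈ L := ⟨0, by simp⟩
    have hfb : f b = u := le_antisymm (hKle b hbK) (hfu2 b hbL)
    have hfv : f v = 0 := by
      by_contra h
      have := hfu2 (b + ((u - f b - 1) / f v) • v) ⟨_, rfl⟩
      rw [map_add, map_smul, smul_eq_mul, div_mul_cancel₀ _ h, hfb] at this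
      linarith
    set n₂ : EuclideanSpace ℝ (Fin d) :=
      (InnerProductSpace.toDual ℝ (EuclideanSpace ℝ (Fin d))).symm f with hn₂def
    have hinner : ∀ x : EuclideanSpace ℝ (Fin d), ⟪n₂, x⟫ = f x := fun x =>
      InnerProductSpace.toDual_symm_apply
    have hf0 : f ≠ 0 := by
      intro h
      obtain ⟨y, hy⟩ := hKint
      have h1 := hfu1 y hy
      have h2 := hfu2 b hbL
      rw [h] at h1 h2
      simp at h1 h2
      linarith
    have hn₂0 : n₂ ≠ 0 := by
      intro h
      apply hf0
      ext x
      have := hinner x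
      rw [h, inner_zero_left] at this
      simp [← this]
    obtain ⟨n₁, c₁, hn₁0, hsup₁, _, hFeq⟩ := hF
    have hb₁ : ⟪n₁, b⟫ = c₁ := by
      have : b ∈ {x ∈ K | ⟪n₁, x⟫ = c₁} := hFeq ▸ hbF
      exact this.2
    have hsup₂ : ∀ x ∈ K, ⟪n₂, x⟫ ≤ u := fun x hx => (hinner x) ▸ hKle x hx
    have hb₂ : ⟪n₂, b⟫ = u := (hinner b).trans hfb
    -- the combined face
    have hm0 : n₁ + n₂ ≠ 0 := by
      intro h
      obtain ⟨y, hy⟩ := hKint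
      have h1 : ⟪n₁, y⟫ < c₁ := inner_lt_of_mem_interior hn₁0 hsup₁ hy
      have h2 : ⟪n₂, y⟫ < u := inner_lt_of_mem_interior hn₂0 hsup₂ hy
      have hsum : ⟪n₁ + n₂, y⟫ = ⟪n₁, y⟫ + ⟪n₂, y⟫ := inner_add_left _ _ _
      have hsb : ⟪n₁ + n₂, b⟫ = ⟪n₁, b⟫ + ⟪n₂, b⟫ := inner_add_left _ _ _
      rw [h, inner_zero_left] at hsum hsb
      rw [hb₁, hb₂] at hsb
      linarith
    set G : Set (EuclideanSpace ℝ (Fin d)) := {x ∈ K | ⟪n₁ + n₂, x⟫ = c₁ + u} with hGdef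
    have hsupm : ∀ x ∈ K, ⟪n₁ + n₂, x⟫ ≤ c₁ + u := by
      intro x hx
      rw [inner_add_left]
      exact add_le_add (hsup₁ x hx) (hsup₂ x hx)
    have hbG : b ∈ G := ⟨hbK, by rw [inner_add_left, hb₁, hb₂]⟩
    have hGface : IsFaceOf K G := ⟨n₁ + n₂, c₁ + u, hm0, hsupm, ⟨b, hbK, hbG.2⟩, rfl⟩
    have hGsplit : ∀ x ∈ G, ⟪n₁, x⟫ = c₁ ∧ ⟪n₂, x⟫ = u := by
      rintro x ⟨hxK, hxeq⟩
      rw [inner_add_left] at hxeq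
      have e1 := hsup₁ x hxK
      have e2 := hsup₂ x hxK
      constructor <;> linarith
    have hGF : G ⊆ F := by
      intro x hx
      rw [hFeq]
      exact ⟨hx.1, (hGsplit x hx).1⟩
    -- spans
    have hmle := hmin G hGface hbG
    rw [direction_affineSpan, direction_affineSpan] at hmle
    have hspaneq : vectorSpan ℝ G = vectorSpan ℝ F :=
      Submodule.eq_of_le_of_finrank_le (vectorSpan_mono ℝ hGF) hmle
    have hker : vectorSpan ℝ G ≤ LinearMap.ker (f : EuclideanSpace ℝ (Fin d) →ₗ[ℝ] ℝ) := by
      rw [vectorSpan_def, Submodule.span_le]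
      rintro w hw
      obtain ⟨x, hx, y, hy, rfl⟩ := hw
      have hx2 := (hGsplit x hx).2
      have hy2 := (hGsplit y hy).2
      rw [hinner] at hx2 hy2
      simp only [SetLike.mem_coe, LinearMap.mem_ker, vsub_eq_sub]
      show f (x - y) = 0
      rw [map_sub, hx2, hy2, sub_self]
    have hFval : ∀ y ∈ F, ⟪n₂, y⟫ = u := by
      intro y hy
      have hmem : y - b ∈ vectorSpan ℝ F := by
        have := vsub_mem_vectorSpan ℝ hy hbF
        rwa [vsub_eq_sub] at this
      rw [← hspaneq] at hmem
      have hz : f (y - b) = 0 := hker hmem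
      rw [map_sub, hfb, sub_eq_zero] at hz
      rw [hinner, hz]
    -- unit normal in gauss image
    have hnorm : (0:ℝ) < ‖n₂‖ := norm_pos_iff.2 hn₂0
    set N : EuclideanSpace ℝ (Fin d) := ‖n₂‖⁻¹ • n₂ with hNdef
    have hNmem : N ∈ gaussImage K F := by
      refine ⟨?_, ‖n₂‖⁻¹ * u, ?_, ?_⟩
      · rw [hNdef, norm_smul, norm_inv, norm_norm, inv_mul_cancel₀ (ne_of_gt hnorm)]
      · intro x hx
        rw [hNdef, real_inner_smul_left]
        exact mul_le_mul_of_nonneg_left (hsup₂ x hx) (by positivity)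
      · intro y hy
        rw [hNdef, real_inner_smul_left, hFval y hy]
    have := hgauss N hNmem
    apply this
    rw [hNdef, real_inner_smul_left, hinner, hfv, mul_zero]
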